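/- Let k be a field of characteristic zero, let α, β ∈ k be nonzero, let λ₁, λ₂ ∈ ℚ, let r ≥ 0 be an integer, and let h ∈ k[Y, Z] be a nonzero polynomial of total degree at most r. Let B₁(y) = Σ_{i≥0} C(λ₁, i)·α^{−i}·y^i and B₂(z) = Σ_{i≥0} C(λ₂, i)·β^{−i}·z^i, where C(λ, i) = λ(λ−1)⋯(λ−i+1)/i! ∈ ℚ (the formal binomial expansions of (1 + y/α)^{λ₁} and (1 + z/β)^{λ₂}). If the product B₁(y)·B₂(z)·h(y + α, z + β) ∈ k[[y,z]] is congruent to a constant modulo the ideal (y, z)^{r+2}, then −λ₁ and −λ₂ are integers with 0 ≤ −λ₁ ≤ r and 0 ≤ −λ₂ ≤ r, one has −λ₁ − λ₂ ≤ r, and h(Y, Z) = e·Y^{−λ₁}·Z^{−λ₂} for some nonzero e ∈ k. -/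

import Mathlib

noncomputable section

/-- The generalized binomial coefficient `C(λ, i) = λ(λ−1)⋯(λ−i+1)/i!` in `ℚ`. -/
def qBinom (l : ℚ) (i : ℕ) : ℚ := (∏ j ∈ Finset.range i, (l - (j : ℚ))) / (Nat.factorial i)

lemma descPochhammer_smeval_rat (l : ℚ) (n : ℕ) :
    Polynomial.smeval (descPochhammer ℤ n) l = ∏ j ∈ Finset.range n, (l - (j : ℚ)) := by
  induction n with
  | zero => simp [descPochhammer_zero, Polynomial.smeval_one]
  | succ n ih =>
      rw [descPochhammer_succ_right, Polynomial.smeval_mul, ih, Finset.prod_range_succ]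
      congr 1
      rw [Polynomial.smeval_sub, Polynomial.smeval_X, Polynomial.smeval_natCast]
      simp

lemma qBinom_eq_choose (l : ℚ) (n : ℕ) : qBinom l n = Ring.choose l n := by
  have h := Ring.descPochhammer_eq_factorial_smul_choose (R := ℚ) l n
  rw [descPochhammer_smeval_rat] at h
  rw [qBinom, h, nsmul_eq_mul]
  field_simp

lemma qBinom_zero (l : ℚ) : qBinom l 0 = 1 := by simp [qBinom]

lemma qBinom_natCast (n i : ℕ) : qBinom (n : ℚ) i = n.choose i := by
  rw [qBinom_eq_choose, Ring.choose_natCast]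

lemma qBinom_eq_zero_iff (l : ℚ) (n : ℕ) : qBinom l n = 0 ↔ ∃ j < n, l = j := by
  rw [qBinom, div_eq_zero_iff]
  have : (Nat.factorial n : ℚ) ≠ 0 := Nat.cast_ne_zero.mpr (Nat.factorial_ne_zero n)
  simp only [this, or_false, Finset.prod_eq_zero_iff, Finset.mem_range, sub_eq_zero]

lemma qBinom_vandermonde (x y : ℚ) (n : ℕ) :
    ∑ ij ∈ Finset.HasAntidiagonal.antidiagonal n, qBinom x ij.1 * qBinom y ij.2 = qBinom (x + y) n := by
  simp only [qBinom_eq_choose]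
  exact (Ring.add_choose_eq n (Commute.all x y)).symm

lemma qBinom_zero_left (n : ℕ) : qBinom 0 n = if n = 0 then 1 else 0 := by
  cases n with
  | zero => simp [qBinom_zero]
  | succ m =>
      rw [if_neg (by omega), qBinom_eq_zero_iff]
      exact ⟨0, by omega, by simp⟩

/-! ### Finsupp on `Fin 2` helpers -/

lemma fin2_decomp (d : Fin 2 →₀ ℕ) :
    d = Finsupp.single 0 (d 0) + Finsupp.single 1 (d 1) := by
  ext a
  fin_cases a <;> simp

lemma fin2_eq_single0 (d : Fin 2 →₀ ℕ) (hd : d 1 = 0) : d = Finsupp.single 0 (d 0) := by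
  ext a
  fin_cases a <;> simp [hd]

lemma fin2_eq_single1 (d : Fin 2 →₀ ℕ) (hd : d 0 = 0) : d = Finsupp.single 1 (d 1) := by
  ext a
  fin_cases a <;> simp [hd]

lemma fin2_sum (d : Fin 2 →₀ ℕ) : (d.sum fun _ e => e) = d 0 + d 1 := by
  rw [fin2_decomp d]
  rw [Finsupp.sum_add_index (by simp) (by simp), Finsupp.sum_single_index rfl,
    Finsupp.sum_single_index rfl]
  simp

lemma fin2_eq_zero (d : Fin 2 →₀ ℕ) : d = 0 ↔ d 0 = 0 ∧ d 1 = 0 := by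
  constructor
  · intro h; subst h; simp
  · rintro ⟨a, b⟩; ext x; fin_cases x <;> simp [a, b]

/-! ### Power series along one axis -/

section Axis

variable {k : Type*} [CommRing k]

/-- power series in the first variable only -/
def ax0 (c : ℕ → k) : MvPowerSeries (Fin 2) k :=
  fun d => if d 1 = 0 then c (d 0) else 0

/-- power series in the second variable only -/
def ax1 (c : ℕ → k) : MvPowerSeries (Fin 2) k :=
  fun d => if d 0 = 0 then c (d 1) else 0

lemma coeff_ax0 (c : ℕ → k) (d : Fin 2 →₀ ℕ) :
    MvPowerSeries.coeff d (ax0 c) = if d 1 = 0 then c (d 0) else 0 := rfl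

lemma coeff_ax1 (c : ℕ → k) (d : Fin 2 →₀ ℕ) :
    MvPowerSeries.coeff d (ax1 c) = if d 0 = 0 then c (d 1) else 0 := rfl

lemma ax0_mul_ax0 (c c' : ℕ → k) :
    ax0 c * ax0 c' = ax0 (fun n => ∑ ij ∈ Finset.HasAntidiagonal.antidiagonal n, c ij.1 * c' ij.2) := by
  apply MvPowerSeries.ext
  intro d
  rw [MvPowerSeries.coeff_mul, coeff_ax0]
  by_cases hd : d 1 = 0
  · rw [if_pos hd, fin2_eq_single0 d hd, Finsupp.antidiagonal_single, Finset.sum_map]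
    simp only [Finsupp.single_eq_same]
    apply Finset.sum_congr rfl
    intro ij _
    simp [coeff_ax0, Function.Embedding.coe_prodMap,
      Finsupp.single_eq_of_ne (show (0:Fin 2) ≠ 1 by decide)]
  · rw [if_neg hd]
    apply Finset.sum_eq_zero
    intro ef hef
    rw [Finset.HasAntidiagonal.mem_antidiagonal] at hef
    have : ef.1 1 + ef.2 1 = d 1 := by rw [← hef]; rfl
    by_cases h1 : ef.1 1 = 0
    · have h2 : ef.2 1 ≠ 0 := by omega
      rw [coeff_ax0, coeff_ax0, if_neg h2, mul_zero]
    · rw [coeff_ax0, if_neg h1, zero_mul]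

lemma ax1_mul_ax1 (c c' : ℕ → k) :
    ax1 c * ax1 c' = ax1 (fun n => ∑ ij ∈ Finset.HasAntidiagonal.antidiagonal n, c ij.1 * c' ij.2) := by
  apply MvPowerSeries.ext
  intro d
  rw [MvPowerSeries.coeff_mul, coeff_ax1]
  by_cases hd : d 0 = 0
  · rw [if_pos hd, fin2_eq_single1 d hd, Finsupp.antidiagonal_single, Finset.sum_map]
    simp only [Finsupp.single_eq_same]
    apply Finset.sum_congr rfl
    intro ij _
    simp [coeff_ax1, Function.Embedding.coe_prodMap,
      Finsupp.single_eq_of_ne (show (1:Fin 2) ≠ 0 by decide)]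
  · rw [if_neg hd]
    apply Finset.sum_eq_zero
    intro ef hef
    rw [Finset.HasAntidiagonal.mem_antidiagonal] at hef
    have : ef.1 0 + ef.2 0 = d 0 := by rw [← hef]; rfl
    by_cases h1 : ef.1 0 = 0
    · have h2 : ef.2 0 ≠ 0 := by omega
      rw [coeff_ax1, coeff_ax1, if_neg h2, mul_zero]
    · rw [coeff_ax1, if_neg h1, zero_mul]

lemma coeff_ax0_mul_ax1 (c c' : ℕ → k) (d : Fin 2 →₀ ℕ) :
    MvPowerSeries.coeff d (ax0 c * ax1 c') = c (d 0) * c' (d 1) := by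
  rw [MvPowerSeries.coeff_mul]
  have hmem : (Finsupp.single (0 : Fin 2) (d 0), Finsupp.single (1 : Fin 2) (d 1))
      ∈ Finset.HasAntidiagonal.antidiagonal d := by
    rw [Finset.HasAntidiagonal.mem_antidiagonal]; exact (fin2_decomp d).symm
  rw [Finset.sum_eq_single_of_mem _ hmem]
  · simp [coeff_ax0, coeff_ax1, Finsupp.single_eq_of_ne (show (0:Fin 2) ≠ 1 by decide),
      Finsupp.single_eq_of_ne (show (1:Fin 2) ≠ 0 by decide)]
  · intro ef hef hne
    rw [Finset.HasAntidiagonal.mem_antidiagonal] at hef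
    by_cases h1 : ef.1 1 = 0
    · by_cases h2 : ef.2 0 = 0
      · exfalso
        apply hne
        have he : ef.1 = Finsupp.single 0 (ef.1 0) := fin2_eq_single0 _ h1
        have hf : ef.2 = Finsupp.single 1 (ef.2 1) := fin2_eq_single1 _ h2
        have h0 : ef.1 0 + ef.2 0 = d 0 := by rw [← hef]; rfl
        have h1' : ef.1 1 + ef.2 1 = d 1 := by rw [← hef]; rfl
        have e0 : ef.1 0 = d 0 := by omega
        have f1 : ef.2 1 = d 1 := by omega
        rw [Prod.ext_iff]
        constructor
        · rw [he, e0]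
        · rw [hf, f1]
      · rw [coeff_ax1, if_neg h2, mul_zero]
    · rw [coeff_ax0, if_neg h1, zero_mul]

end Axis

section Field

variable {k : Type*} [Field k] [CharZero k]

/-- coefficient sequence of the binomial series `(1 + u·t)^l` -/
def cSeq (l : ℚ) (u : k) : ℕ → k := fun i => ((qBinom l i : ℚ) : k) * u ^ i

lemma conv_cSeq (l l' : ℚ) (u : k) (n : ℕ) :
    ∑ ij ∈ Finset.HasAntidiagonal.antidiagonal n, cSeq l u ij.1 * cSeq l' u ij.2
      = cSeq (l + l') u n := by
  show _ = ((qBinom (l + l') n : ℚ) : k) * u ^ n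
  rw [← qBinom_vandermonde, Rat.cast_sum, Finset.sum_mul]
  apply Finset.sum_congr rfl
  intro ij hij
  rw [Finset.HasAntidiagonal.mem_antidiagonal] at hij
  simp only [cSeq]
  rw [← hij, pow_add]
  push_cast
  ring

lemma ax0_cSeq_zero (u : k) : ax0 (cSeq 0 u) = 1 := by
  apply MvPowerSeries.ext; intro d
  rw [coeff_ax0, MvPowerSeries.coeff_one]
  simp only [cSeq, qBinom_zero_left]
  by_cases h1 : d 1 = 0 <;> by_cases h0 : d 0 = 0 <;>
    simp [h0, h1, fin2_eq_zero]

lemma ax1_cSeq_zero (u : k) : ax1 (cSeq 0 u) = 1 := by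
  apply MvPowerSeries.ext; intro d
  rw [coeff_ax1, MvPowerSeries.coeff_one]
  simp only [cSeq, qBinom_zero_left]
  by_cases h1 : d 1 = 0 <;> by_cases h0 : d 0 = 0 <;>
    simp [h0, h1, fin2_eq_zero]

lemma ax0_inv (l : ℚ) (u : k) : ax0 (cSeq (-l) u) * ax0 (cSeq l u) = 1 := by
  rw [ax0_mul_ax0]
  have : (fun n => ∑ ij ∈ Finset.HasAntidiagonal.antidiagonal n, cSeq (-l) u ij.1 * cSeq l u ij.2)
      = cSeq (0 : ℚ) u := funext fun n => by rw [conv_cSeq, neg_add_cancel]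
  rw [this, ax0_cSeq_zero]

lemma ax1_inv (l : ℚ) (u : k) : ax1 (cSeq (-l) u) * ax1 (cSeq l u) = 1 := by
  rw [ax1_mul_ax1]
  have : (fun n => ∑ ij ∈ Finset.HasAntidiagonal.antidiagonal n, cSeq (-l) u ij.1 * cSeq l u ij.2)
      = cSeq (0 : ℚ) u := funext fun n => by rw [conv_cSeq, neg_add_cancel]
  rw [this, ax1_cSeq_zero]

open MvPolynomial in
lemma coeff_X_add_C_pow0 (a : k) (n : ℕ) (d : Fin 2 →₀ ℕ) :
    MvPolynomial.coeff d ((X (0 : Fin 2) + C a) ^ n)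
      = if d 1 = 0 then (n.choose (d 0) : k) * a ^ (n - d 0) else 0 := by
  rw [add_pow]
  have hterm : ∀ i : ℕ, (X (0 : Fin 2))^i * C a ^ (n - i) * (n.choose i : MvPolynomial (Fin 2) k)
      = monomial (Finsupp.single (0 : Fin 2) i) (a ^ (n - i) * (n.choose i : k)) := by
    intro i
    rw [X_pow_eq_monomial, ← C_pow, ← C_eq_coe_nat, mul_assoc, ← C_mul, C_apply, monomial_mul, one_mul, add_zero]
  simp only [hterm]
  rw [MvPolynomial.coeff_sum]
  simp only [MvPolynomial.coeff_monomial]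
  by_cases hd : d 1 = 0
  · rw [if_pos hd]
    have hsingle : ∀ i : ℕ, (Finsupp.single (0 : Fin 2) i = d) ↔ i = d 0 := by
      intro i
      constructor
      · intro h; rw [← h]; simp
      · intro h; rw [h]; exact (fin2_eq_single0 d hd).symm
    simp only [hsingle]
    rw [Finset.sum_ite_eq' (Finset.range (n + 1)) (d 0)
      (fun i => a ^ (n - i) * (n.choose i : k))]
    by_cases hle : d 0 ≤ n
    · rw [if_pos (Finset.mem_range.mpr (by omega)), mul_comm]
    · rw [if_neg (by simp; omega), Nat.choose_eq_zero_of_lt (by omega)]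
      simp
  · rw [if_neg hd]
    apply Finset.sum_eq_zero
    intro i _
    rw [if_neg]
    intro hcon
    apply hd
    rw [← hcon]
    simp [Finsupp.single_eq_of_ne (show (0:Fin 2) ≠ 1 by decide)]

open MvPolynomial in
lemma coeff_X_add_C_pow1 (a : k) (n : ℕ) (d : Fin 2 →₀ ℕ) :
    MvPolynomial.coeff d ((X (1 : Fin 2) + C a) ^ n)
      = if d 0 = 0 then (n.choose (d 1) : k) * a ^ (n - d 1) else 0 := by
  rw [add_pow]
  have hterm : ∀ i : ℕ, (X (1 : Fin 2))^i * C a ^ (n - i) * (n.choose i : MvPolynomial (Fin 2) k)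
      = monomial (Finsupp.single (1 : Fin 2) i) (a ^ (n - i) * (n.choose i : k)) := by
    intro i
    rw [X_pow_eq_monomial, ← C_pow, ← C_eq_coe_nat, mul_assoc, ← C_mul, C_apply, monomial_mul, one_mul, add_zero]
  simp only [hterm]
  rw [MvPolynomial.coeff_sum]
  simp only [MvPolynomial.coeff_monomial]
  by_cases hd : d 0 = 0
  · rw [if_pos hd]
    have hsingle : ∀ i : ℕ, (Finsupp.single (1 : Fin 2) i = d) ↔ i = d 1 := by
      intro i
      constructor
      · intro h; rw [← h]; simp
      · intro h; rw [h]; exact (fin2_eq_single1 d hd).symm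
    simp only [hsingle]
    rw [Finset.sum_ite_eq' (Finset.range (n + 1)) (d 1)
      (fun i => a ^ (n - i) * (n.choose i : k))]
    by_cases hle : d 1 ≤ n
    · rw [if_pos (Finset.mem_range.mpr (by omega)), mul_comm]
    · rw [if_neg (by simp; omega), Nat.choose_eq_zero_of_lt (by omega)]
      simp
  · rw [if_neg hd]
    apply Finset.sum_eq_zero
    intro i _
    rw [if_neg]
    intro hcon
    apply hd
    rw [← hcon]
    simp [Finsupp.single_eq_of_ne (show (1:Fin 2) ≠ 0 by decide)]

end Field

/-- if the product of the formal binomial series `(1 + y/α)^{λ₁}`,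
`(1 + z/β)^{λ₂}` and `h(y + α, z + β)` is congruent to a constant modulo `(y,z)^{r+2}`,
where `h` is a nonzero polynomial of total degree at most `r`, then `−λ₁, −λ₂ ∈ {0,…,r}`,
`−λ₁ − λ₂ ≤ r`, and `h(Y,Z) = e Y^{−λ₁} Z^{−λ₂}` for some `e ≠ 0`. -/
theorem binomial_series_times_polynomial_constant_two_vars
    (k : Type*) [Field k] [CharZero k]
    (α β : k) (hα : α ≠ 0) (hβ : β ≠ 0) (l₁ l₂ : ℚ) (r : ℕ)
    (h : MvPolynomial (Fin 2) k) (hh : h ≠ 0) (hdeg : h.totalDegree ≤ r)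
    (B₁ B₂ : MvPowerSeries (Fin 2) k)
    (hB₁ : B₁ = fun d : Fin 2 →₀ ℕ =>
      if d 1 = 0 then ((qBinom l₁ (d 0) : ℚ) : k) * α⁻¹ ^ (d 0) else 0)
    (hB₂ : B₂ = fun d : Fin 2 →₀ ℕ =>
      if d 0 = 0 then ((qBinom l₂ (d 1) : ℚ) : k) * β⁻¹ ^ (d 1) else 0)
    (hconst : ∀ d : Fin 2 →₀ ℕ, 1 ≤ d 0 + d 1 → d 0 + d 1 ≤ r + 1 →
      MvPowerSeries.coeff d
        (B₁ * B₂ * MvPolynomial.aeval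
          (fun i : Fin 2 => MvPowerSeries.X i +
            MvPowerSeries.C (if i = 0 then α else β)) h) = 0) :
    ∃ n₁ n₂ : ℕ, l₁ = -(n₁ : ℚ) ∧ l₂ = -(n₂ : ℚ) ∧ n₁ ≤ r ∧ n₂ ≤ r ∧ n₁ + n₂ ≤ r ∧
      ∃ e : k, e ≠ 0 ∧
        h = MvPolynomial.C e * MvPolynomial.X 0 ^ n₁ * MvPolynomial.X 1 ^ n₂ := by
  classical
  -- the substituted polynomial g(Y,Z) = h(Y+α, Z+β)
  set σp : Fin 2 → MvPolynomial (Fin 2) k :=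
    fun i => MvPolynomial.X i + MvPolynomial.C (if i = 0 then α else β) with hσp
  set τp : Fin 2 → MvPolynomial (Fin 2) k :=
    fun i => MvPolynomial.X i - MvPolynomial.C (if i = 0 then α else β) with hτp
  set g : MvPolynomial (Fin 2) k := MvPolynomial.aeval σp h with hgdef
  -- the coercion MvPolynomial → MvPowerSeries as the algebra hom
  have hcoe : ∀ p : MvPolynomial (Fin 2) k,
      (MvPolynomial.coeToMvPowerSeries.algHom (σ := Fin 2) (R := k) k) p
        = (p : MvPowerSeries (Fin 2) k) := by
    intro p
    rw [MvPolynomial.coeToMvPowerSeries.algHom_apply, Algebra.algebraMap_self,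
      MvPowerSeries.map_id]
    rfl
  have hF : (MvPolynomial.aeval
        (fun i : Fin 2 => MvPowerSeries.X i +
          MvPowerSeries.C (if i = 0 then α else β)) h : MvPowerSeries (Fin 2) k)
      = (g : MvPowerSeries (Fin 2) k) := by
    have hfun : ∀ i : Fin 2,
        (MvPolynomial.coeToMvPowerSeries.algHom (σ := Fin 2) (R := k) k) (σp i)
          = MvPowerSeries.X i + MvPowerSeries.C (if i = 0 then α else β) := by
      intro i
      rw [hcoe, hσp]
      push_cast [MvPolynomial.coe_add, MvPolynomial.coe_X, MvPolynomial.coe_C]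
      rfl
    rw [hgdef, ← hcoe, MvPolynomial.comp_aeval_apply]
    exact congrArg (fun f => MvPolynomial.aeval f h) (funext fun i => (hfun i).symm)
  -- inverse substitution
  have hinv : ∀ p : MvPolynomial (Fin 2) k,
      MvPolynomial.aeval τp (MvPolynomial.aeval σp p) = p := by
    intro p
    rw [MvPolynomial.comp_aeval_apply]
    have : (fun i : Fin 2 => MvPolynomial.aeval τp (σp i))
        = fun i : Fin 2 => (MvPolynomial.X i : MvPolynomial (Fin 2) k) := by
      funext i
      simp [hσp, hτp, MvPolynomial.aeval_X, MvPolynomial.aeval_C,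
        MvPolynomial.algebraMap_eq]
    rw [this, MvPolynomial.aeval_X_left_apply]
  -- degree bound on g
  have hgdeg : g.totalDegree ≤ r := by
    refine le_trans ?_ hdeg
    rw [hgdef]
    conv_lhs => rw [h.as_sum]
    rw [map_sum]
    apply MvPolynomial.totalDegree_finsetSum_le
    intro m hm
    rw [MvPolynomial.aeval_monomial]
    refine le_trans (MvPolynomial.totalDegree_mul _ _) ?_
    rw [MvPolynomial.algebraMap_eq, MvPolynomial.totalDegree_C, zero_add]
    refine le_trans (MvPolynomial.totalDegree_finset_prod _ _) ?_
    refine le_trans ?_ (MvPolynomial.le_totalDegree hm)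
    rw [Finsupp.sum]
    apply Finset.sum_le_sum
    intro i _
    refine le_trans (MvPolynomial.totalDegree_pow _ _) ?_
    have h1 : (σp i).totalDegree ≤ 1 := by
      refine le_trans (MvPolynomial.totalDegree_add _ _) ?_
      simp [MvPolynomial.totalDegree_X, MvPolynomial.totalDegree_C]
    calc m i * (σp i).totalDegree ≤ m i * 1 := Nat.mul_le_mul_left _ h1
      _ = m i := mul_one _
  -- vanishing of high coefficients of g
  have hvanish : ∀ d : Fin 2 →₀ ℕ, r < d 0 + d 1 → MvPolynomial.coeff d g = 0 := by
    intro d hd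
    by_contra hne
    have hmem : d ∈ g.support := MvPolynomial.mem_support_iff.mpr hne
    have := MvPolynomial.le_totalDegree hmem
    rw [fin2_sum] at this
    omega
  -- identify B₁, B₂ with axis series
  have hB₁' : B₁ = ax0 (cSeq l₁ α⁻¹) := by rw [hB₁]; rfl
  have hB₂' : B₂ = ax1 (cSeq l₂ β⁻¹) := by rw [hB₂]; rfl
  set P : MvPowerSeries (Fin 2) k := ax0 (cSeq (-l₁) α⁻¹) * ax1 (cSeq (-l₂) β⁻¹) with hP
  have hPB : P * (B₁ * B₂) = 1 := by
    rw [hB₁', hB₂', hP]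
    calc ax0 (cSeq (-l₁) α⁻¹) * ax1 (cSeq (-l₂) β⁻¹) * (ax0 (cSeq l₁ α⁻¹) * ax1 (cSeq l₂ β⁻¹))
        = (ax0 (cSeq (-l₁) α⁻¹) * ax0 (cSeq l₁ α⁻¹)) *
          (ax1 (cSeq (-l₂) β⁻¹) * ax1 (cSeq l₂ β⁻¹)) := by ring
      _ = 1 := by rw [ax0_inv, ax1_inv, one_mul]
  set c : k := MvPolynomial.coeff 0 g with hcdef
  set F : MvPowerSeries (Fin 2) k := B₁ * B₂ * (g : MvPowerSeries (Fin 2) k) with hFdef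
  -- F ≡ c modulo degrees ≤ r+1
  have hFc : ∀ d : Fin 2 →₀ ℕ, d 0 + d 1 ≤ r + 1 →
      MvPowerSeries.coeff d (F - MvPowerSeries.C c) = 0 := by
    intro d hd
    rw [map_sub]
    by_cases h0 : d = 0
    · subst h0
      rw [MvPowerSeries.coeff_zero_C, hFdef, MvPowerSeries.coeff_zero_eq_constantCoeff_apply,
        map_mul, map_mul]
      have e1 : MvPowerSeries.constantCoeff B₁ = 1 := by
        rw [hB₁', ← MvPowerSeries.coeff_zero_eq_constantCoeff_apply, coeff_ax0]
        simp [cSeq, qBinom_zero]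
      have e2 : MvPowerSeries.constantCoeff B₂ = 1 := by
        rw [hB₂', ← MvPowerSeries.coeff_zero_eq_constantCoeff_apply, coeff_ax1]
        simp [cSeq, qBinom_zero]
      have e3 : MvPowerSeries.constantCoeff (g : MvPowerSeries (Fin 2) k) = c := by
        rw [← MvPowerSeries.coeff_zero_eq_constantCoeff_apply, MvPolynomial.coeff_coe]
      rw [e1, e2, e3, one_mul, one_mul, sub_self]
    · have h1 : 1 ≤ d 0 + d 1 := by
        rcases Nat.eq_zero_or_pos (d 0 + d 1) with hz | hz
        · exact absurd ((fin2_eq_zero d).mpr (by omega)) h0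
        · exact hz
      have hcc := hconst d h1 hd
      rw [hF] at hcc
      rw [hFdef, hcc, MvPowerSeries.coeff_C, if_neg h0, sub_zero]
  -- the key coefficient congruence
  have key : ∀ d : Fin 2 →₀ ℕ, d 0 + d 1 ≤ r + 1 →
      MvPolynomial.coeff d g = c * (cSeq (-l₁) α⁻¹ (d 0) * cSeq (-l₂) β⁻¹ (d 1)) := by
    intro d hd
    have h1 : MvPowerSeries.coeff d (P * (F - MvPowerSeries.C c)) = 0 := by
      rw [MvPowerSeries.coeff_mul]
      apply Finset.sum_eq_zero
      intro ef hef
      rw [Finset.HasAntidiagonal.mem_antidiagonal] at hef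
      have h2 : ef.2 0 + ef.2 1 ≤ r + 1 := by
        have e0 : ef.1 0 + ef.2 0 = d 0 := by rw [← hef]; rfl
        have e1 : ef.1 1 + ef.2 1 = d 1 := by rw [← hef]; rfl
        omega
      rw [hFc _ h2, mul_zero]
    have h2 : P * (F - MvPowerSeries.C c)
        = (g : MvPowerSeries (Fin 2) k) - MvPowerSeries.C c * P := by
      rw [hFdef, mul_sub,
        show P * (B₁ * B₂ * (g : MvPowerSeries (Fin 2) k))
          = P * (B₁ * B₂) * (g : MvPowerSeries (Fin 2) k) by ring, hPB, one_mul]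
      ring
    rw [h2, map_sub, sub_eq_zero] at h1
    rw [← MvPolynomial.coeff_coe, h1]
    have h3 : MvPowerSeries.coeff d (MvPowerSeries.C c * P)
        = c * MvPowerSeries.coeff d P := by
      have : MvPowerSeries.C c * P = c • P := by
        rw [← MvPowerSeries.smul_eq_C_mul]
      rw [this, map_smul, smul_eq_mul]
    rw [h3, hP, coeff_ax0_mul_ax1]
  -- c is nonzero
  have hc0 : c ≠ 0 := by
    intro hc'
    have hg0 : g = 0 := by
      apply MvPolynomial.ext
      intro d
      rw [MvPolynomial.coeff_zero]
      by_cases hd : d 0 + d 1 ≤ r + 1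
      · rw [key d hd, hc', zero_mul]
      · exact hvanish d (by omega)
    apply hh
    have hi := hinv h
    rw [← hgdef, hg0, map_zero] at hi
    exact hi.symm
  -- the rational relations
  have hq : ∀ a b : ℕ, a + b = r + 1 → qBinom (-l₁) a * qBinom (-l₂) b = 0 := by
    intro a b hab
    set d : Fin 2 →₀ ℕ := Finsupp.single 0 a + Finsupp.single 1 b with hd
    have hd0 : d 0 = a := by
      simp [hd, Finsupp.single_eq_of_ne (show (1:Fin 2) ≠ 0 by decide)]
    have hd1 : d 1 = b := by
      simp [hd, Finsupp.single_eq_of_ne (show (0:Fin 2) ≠ 1 by decide)]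
    have hzero : MvPolynomial.coeff d g = 0 := hvanish d (by omega)
    have hk := key d (by omega)
    rw [hzero, hd0, hd1] at hk
    simp only [cSeq] at hk
    have hα' : (α⁻¹ : k) ^ a ≠ 0 := pow_ne_zero _ (inv_ne_zero hα)
    have hβ' : (β⁻¹ : k) ^ b ≠ 0 := pow_ne_zero _ (inv_ne_zero hβ)
    have t1 := (mul_eq_zero.mp hk.symm).resolve_left hc0
    have hcast : ((qBinom (-l₁) a : ℚ) : k) * ((qBinom (-l₂) b : ℚ) : k) = 0 := by
      rcases mul_eq_zero.mp t1 with t2 | t2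
      · rcases mul_eq_zero.mp t2 with t3 | t3
        · rw [t3, zero_mul]
        · exact absurd t3 hα'
      · rcases mul_eq_zero.mp t2 with t3 | t3
        · rw [t3, mul_zero]
        · exact absurd t3 hβ'
    rw [← Rat.cast_mul] at hcast
    exact_mod_cast hcast
  -- extract n₁
  obtain ⟨n₁, hn₁lt, hn₁⟩ : ∃ j < r + 1, -l₁ = (j : ℚ) := by
    rw [← qBinom_eq_zero_iff]
    have := hq (r + 1) 0 (by omega)
    rwa [qBinom_zero, mul_one] at this
  obtain ⟨n₂, hn₂lt, hn₂⟩ : ∃ j < r + 1, -l₂ = (j : ℚ) := by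
    rw [← qBinom_eq_zero_iff]
    have := hq 0 (r + 1) (by omega)
    rwa [qBinom_zero, one_mul] at this
  have hsum : n₁ + n₂ ≤ r := by
    by_contra hlt
    push_neg at hlt
    have hb : r + 1 - n₁ ≤ n₂ := by omega
    have := hq n₁ (r + 1 - n₁) (by omega)
    rw [hn₁, hn₂, qBinom_natCast, qBinom_natCast] at this
    rcases mul_eq_zero.mp this with t | t
    · have : 0 < n₁.choose n₁ := Nat.choose_pos le_rfl
      rw [Nat.cast_eq_zero] at t
      omega
    · have : 0 < n₂.choose (r + 1 - n₁) := Nat.choose_pos hb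
      rw [Nat.cast_eq_zero] at t
      omega
  refine ⟨n₁, n₂, by rw [← hn₁, neg_neg], by rw [← hn₂, neg_neg], by omega, by omega, hsum, ?_⟩
  set e : k := c * α⁻¹ ^ n₁ * β⁻¹ ^ n₂ with hedef
  have he0 : e ≠ 0 :=
    mul_ne_zero (mul_ne_zero hc0 (pow_ne_zero _ (inv_ne_zero hα)))
      (pow_ne_zero _ (inv_ne_zero hβ))
  refine ⟨e, he0, ?_⟩
  set h₀ : MvPolynomial (Fin 2) k :=
    MvPolynomial.C e * MvPolynomial.X 0 ^ n₁ * MvPolynomial.X 1 ^ n₂ with hh₀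
  -- coefficient formula for aeval σp h₀
  have hexpand : MvPolynomial.aeval σp h₀
      = MvPolynomial.C e * ((MvPolynomial.X (0 : Fin 2) + MvPolynomial.C α) ^ n₁ *
        (MvPolynomial.X (1 : Fin 2) + MvPolynomial.C β) ^ n₂) := by
    rw [hh₀, map_mul, map_mul, map_pow, map_pow, MvPolynomial.aeval_X, MvPolynomial.aeval_X,
      MvPolynomial.aeval_C, MvPolynomial.algebraMap_eq, hσp]
    simp only [if_neg (show (1 : Fin 2) ≠ 0 by decide), if_pos rfl, if_true]
    ring
  have hprod : ∀ d : Fin 2 →₀ ℕ,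
      MvPolynomial.coeff d ((MvPolynomial.X (0 : Fin 2) + MvPolynomial.C α) ^ n₁ *
        (MvPolynomial.X (1 : Fin 2) + MvPolynomial.C β) ^ n₂)
      = ((n₁.choose (d 0) : k) * α ^ (n₁ - d 0)) * ((n₂.choose (d 1) : k) * β ^ (n₂ - d 1)) := by
    intro d
    have hc1 : ((((MvPolynomial.X (0 : Fin 2) + MvPolynomial.C α) ^ n₁ : MvPolynomial (Fin 2) k))
        : MvPowerSeries (Fin 2) k) = ax0 (fun i => (n₁.choose i : k) * α ^ (n₁ - i)) := by
      apply MvPowerSeries.ext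
      intro d'
      rw [MvPolynomial.coeff_coe, coeff_X_add_C_pow0, coeff_ax0]
    have hc2 : ((((MvPolynomial.X (1 : Fin 2) + MvPolynomial.C β) ^ n₂ : MvPolynomial (Fin 2) k))
        : MvPowerSeries (Fin 2) k) = ax1 (fun i => (n₂.choose i : k) * β ^ (n₂ - i)) := by
      apply MvPowerSeries.ext
      intro d'
      rw [MvPolynomial.coeff_coe, coeff_X_add_C_pow1, coeff_ax1]
    rw [← MvPolynomial.coeff_coe, MvPolynomial.coe_mul, hc1, hc2, coeff_ax0_mul_ax1]
  -- g equals the substituted h₀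
  have hgg : MvPolynomial.aeval σp h₀ = g := by
    apply MvPolynomial.ext
    intro d
    rw [hexpand, MvPolynomial.coeff_C_mul, hprod]
    by_cases hd : d 0 + d 1 ≤ r + 1
    · rw [key d hd]
      simp only [cSeq]
      rw [hn₁, hn₂, qBinom_natCast, qBinom_natCast]
      by_cases h0 : d 0 ≤ n₁
      · by_cases h1 : d 1 ≤ n₂
        · rw [hedef, pow_sub₀ α hα h0, pow_sub₀ β hβ h1, inv_pow, inv_pow]
          simp only [Rat.cast_natCast]
          have ha : α ^ n₁ * α⁻¹ ^ n₁ = 1 := by rw [← mul_pow, mul_inv_cancel₀ hα, one_pow]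
          have hb : β ^ n₂ * β⁻¹ ^ n₂ = 1 := by rw [← mul_pow, mul_inv_cancel₀ hβ, one_pow]
          linear_combination (c * α⁻¹ ^ d 0 * β⁻¹ ^ d 1 * ((n₁.choose (d 0) : ℕ) : k)
            * ((n₂.choose (d 1) : ℕ) : k) * (β ^ n₂ * β⁻¹ ^ n₂)) * ha
            + c * α⁻¹ ^ d 0 * β⁻¹ ^ d 1 * ((n₁.choose (d 0) : ℕ) : k)
            * ((n₂.choose (d 1) : ℕ) : k) * hb
        · rw [Nat.choose_eq_zero_of_lt (show n₂ < d 1 by omega)]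
          push_cast
          ring
      · rw [Nat.choose_eq_zero_of_lt (show n₁ < d 0 by omega)]
        push_cast
        ring
    · rw [hvanish d (by omega)]
      have : n₁ < d 0 ∨ n₂ < d 1 := by omega
      rcases this with hlt | hlt <;>
        rw [Nat.choose_eq_zero_of_lt hlt] <;> push_cast <;> ring
  -- conclude
  have hfin := hinv h₀
  rw [hgg] at hfin
  rw [← hfin]
  exact (hinv h).symm

end
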